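/- Let A map datasets S ∈ X^m to probability measures on Θ and be ε-differentially private, and let ℓ : Θ × X → ℝ be measurable with 0 ≤ ℓ(θ,x) ≤ 1 for all θ, x. Define F(S) = E_{θ~A(S)} [ (1/m)∑_{i=1}^m ℓ(θ, x_i) ]. Then F has the bounded-differences property: for all adjacent datasets S, S' ∈ X^m (differing in one entry), |F(S) − F(S')| ≤ (e^ε − 1) + 1/m. -/
import Mathlib


open MeasureTheory Real

/-- Two datasets of size `m` are adjacent if they differ in at most one entry. -/
def Adjacent {X : Type*} {m : ℕ} (S S' : Fin m → X) : Prop :=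
  ∃ i : Fin m, ∀ j : Fin m, j ≠ i → S j = S' j

lemma aux_int_diff_le {Θ : Type*} [MeasurableSpace Θ] (μ ν : Measure Θ)
    [IsProbabilityMeasure μ] [IsProbabilityMeasure ν] (c : ℝ) (hc : 1 ≤ c)
    (hle : ∀ O : Set Θ, MeasurableSet O → μ O ≤ ENNReal.ofReal c * ν O)
    (f : Θ → ℝ) (hf : Measurable f) (h0 : ∀ θ, 0 ≤ f θ) (h1 : ∀ θ, f θ ≤ 1) :
    ∫ θ, f θ ∂μ - ∫ θ, f θ ∂ν ≤ c - 1 := by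
  have hmle : μ ≤ (ENNReal.ofReal c) • ν :=
    Measure.le_iff.mpr fun s hs => by simpa using hle s hs
  have ha : ∫⁻ θ, ENNReal.ofReal (f θ) ∂μ ≤ ENNReal.ofReal c * ∫⁻ θ, ENNReal.ofReal (f θ) ∂ν := by
    calc ∫⁻ θ, ENNReal.ofReal (f θ) ∂μ ≤ ∫⁻ θ, ENNReal.ofReal (f θ) ∂((ENNReal.ofReal c) • ν) :=
          lintegral_mono' hmle le_rfl
      _ = ENNReal.ofReal c * ∫⁻ θ, ENNReal.ofReal (f θ) ∂ν := lintegral_smul_measure _ _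
  have hbν : ∫⁻ θ, ENNReal.ofReal (f θ) ∂ν ≤ 1 := by
    calc ∫⁻ θ, ENNReal.ofReal (f θ) ∂ν ≤ ∫⁻ _, 1 ∂ν :=
          lintegral_mono fun θ => by simpa using ENNReal.ofReal_le_ofReal (h1 θ)
      _ = 1 := by simp
  have heqμ : ∫ θ, f θ ∂μ = (∫⁻ θ, ENNReal.ofReal (f θ) ∂μ).toReal :=
    integral_eq_lintegral_of_nonneg_ae (Filter.Eventually.of_forall h0) hf.aestronglyMeasurable
  have heqν : ∫ θ, f θ ∂ν = (∫⁻ θ, ENNReal.ofReal (f θ) ∂ν).toReal :=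
    integral_eq_lintegral_of_nonneg_ae (Filter.Eventually.of_forall h0) hf.aestronglyMeasurable
  set a := ∫⁻ θ, ENNReal.ofReal (f θ) ∂μ
  set b := ∫⁻ θ, ENNReal.ofReal (f θ) ∂ν
  have hbne : b ≠ ⊤ := (lt_of_le_of_lt hbν ENNReal.one_lt_top).ne
  have hane : a ≠ ⊤ := (lt_of_le_of_lt (ha.trans (mul_le_mul_right hbν _))
      (by simp)).ne
  rw [heqμ, heqν]
  have hb1 : b.toReal ≤ 1 := by
    simpa using ENNReal.toReal_mono (by simp) hbν
  have hab : a.toReal ≤ c * b.toReal := by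
    have := ENNReal.toReal_mono (by simp [ENNReal.mul_ne_top, hbne]) ha
    rwa [ENNReal.toReal_mul, ENNReal.toReal_ofReal (by linarith)] at this
  nlinarith [b.toReal_nonneg]


/-- bounded differences of the averaged empirical loss under DP: if `A`
is ε-differentially private and `0 ≤ ℓ ≤ 1`, then
`F(S) = E_{θ~A(S)} [(1/m) ∑_i ℓ(θ, x_i)]` satisfies
`|F(S) − F(S')| ≤ (e^ε − 1) + 1/m` for all adjacent `S, S'`. -/
theorem dp_bounded_differences {X Θ : Type*} [MeasurableSpace X] [MeasurableSpace Θ]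
    {m : ℕ} (hm : 0 < m)
    (A : (Fin m → X) → Measure Θ) (hprob : ∀ S, IsProbabilityMeasure (A S))
    (ε : ℝ) (hε : 0 ≤ ε)
    (hdp : ∀ S S' : Fin m → X, Adjacent S S' → ∀ O : Set Θ, MeasurableSet O →
      A S O ≤ ENNReal.ofReal (exp ε) * A S' O)
    (ℓ : Θ → X → ℝ) (hmeas : Measurable (Function.uncurry ℓ))
    (h0 : ∀ θ x, 0 ≤ ℓ θ x) (h1 : ∀ θ x, ℓ θ x ≤ 1) :
    ∀ S S' : Fin m → X, Adjacent S S' →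
      |(∫ θ, (m : ℝ)⁻¹ * ∑ i : Fin m, ℓ θ (S i) ∂(A S)) -
        ∫ θ, (m : ℝ)⁻¹ * ∑ i : Fin m, ℓ θ (S' i) ∂(A S')| ≤
        (exp ε - 1) + (m : ℝ)⁻¹ := by
  intro S S' hadj
  haveI := hprob S; haveI := hprob S'
  obtain ⟨i₀, hi₀⟩ := hadj
  have hadj' : Adjacent S' S := ⟨i₀, fun j hj => (hi₀ j hj).symm⟩
  set f : Θ → ℝ := fun θ => (m : ℝ)⁻¹ * ∑ i : Fin m, ℓ θ (S i) with hfdef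
  set g : Θ → ℝ := fun θ => (m : ℝ)⁻¹ * ∑ i : Fin m, ℓ θ (S' i) with hgdef
  have hmpos : (0:ℝ) < m := Nat.cast_pos.mpr hm
  have hmeasθ : ∀ x : X, Measurable (fun θ => ℓ θ x) := fun x =>
    hmeas.comp (measurable_id.prodMk measurable_const)
  have hfmeas : Measurable f := by
    apply Measurable.const_mul
    exact Finset.measurable_sum _ fun i _ => hmeasθ (S i)
  have hgmeas : Measurable g := by
    apply Measurable.const_mul
    exact Finset.measurable_sum _ fun i _ => hmeasθ (S' i)
  have hf0 : ∀ θ, 0 ≤ f θ := fun θ =>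
    mul_nonneg (by positivity) (Finset.sum_nonneg fun i _ => h0 θ (S i))
  have hf1 : ∀ θ, f θ ≤ 1 := by
    intro θ
    have : ∑ i : Fin m, ℓ θ (S i) ≤ m := by
      calc ∑ i : Fin m, ℓ θ (S i) ≤ ∑ _i : Fin m, (1:ℝ) :=
            Finset.sum_le_sum fun i _ => h1 θ (S i)
        _ = m := by simp
    rw [hfdef]
    calc (m:ℝ)⁻¹ * ∑ i : Fin m, ℓ θ (S i) ≤ (m:ℝ)⁻¹ * m :=
          mul_le_mul_of_nonneg_left this (by positivity)
      _ = 1 := inv_mul_cancel₀ hmpos.ne'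
  have hg0 : ∀ θ, 0 ≤ g θ := fun θ =>
    mul_nonneg (by positivity) (Finset.sum_nonneg fun i _ => h0 θ (S' i))
  have hg1 : ∀ θ, g θ ≤ 1 := by
    intro θ
    have : ∑ i : Fin m, ℓ θ (S' i) ≤ m := by
      calc ∑ i : Fin m, ℓ θ (S' i) ≤ ∑ _i : Fin m, (1:ℝ) :=
            Finset.sum_le_sum fun i _ => h1 θ (S' i)
        _ = m := by simp
    rw [hgdef]
    calc (m:ℝ)⁻¹ * ∑ i : Fin m, ℓ θ (S' i) ≤ (m:ℝ)⁻¹ * m :=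
          mul_le_mul_of_nonneg_left this (by positivity)
      _ = 1 := inv_mul_cancel₀ hmpos.ne'
  have hc : (1:ℝ) ≤ exp ε := by
    rw [show (1:ℝ) = exp 0 from (Real.exp_zero).symm]; exact exp_le_exp.mpr hε
  -- bound 1: |∫ f dA(S) - ∫ f dA(S')| ≤ e^ε - 1
  have hb1 : |(∫ θ, f θ ∂(A S)) - ∫ θ, f θ ∂(A S')| ≤ exp ε - 1 := by
    rw [abs_sub_le_iff]
    constructor
    · exact aux_int_diff_le (A S) (A S') _ hc (hdp S S' ⟨i₀, hi₀⟩) f hfmeas hf0 hf1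
    · exact aux_int_diff_le (A S') (A S) _ hc (hdp S' S hadj') f hfmeas hf0 hf1
  -- bound 2: |∫ f dA(S') - ∫ g dA(S')| ≤ 1/m
  have hfg : ∀ θ, |f θ - g θ| ≤ (m:ℝ)⁻¹ := by
    intro θ
    have hsum : ∑ i : Fin m, (ℓ θ (S i) - ℓ θ (S' i)) = ℓ θ (S i₀) - ℓ θ (S' i₀) := by
      apply Finset.sum_eq_single
      · intro j _ hj; rw [hi₀ j hj]; ring
      · intro h; exact absurd (Finset.mem_univ i₀) h
    have : f θ - g θ = (m:ℝ)⁻¹ * (ℓ θ (S i₀) - ℓ θ (S' i₀)) := by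
      rw [hfdef, hgdef]; simp only
      rw [← mul_sub, ← Finset.sum_sub_distrib, hsum]
    rw [this, abs_mul, abs_of_nonneg (by positivity : (0:ℝ) ≤ (m:ℝ)⁻¹)]
    have : |ℓ θ (S i₀) - ℓ θ (S' i₀)| ≤ 1 := by
      rw [abs_sub_le_iff]
      constructor <;> nlinarith [h0 θ (S i₀), h1 θ (S i₀), h0 θ (S' i₀), h1 θ (S' i₀)]
    calc (m:ℝ)⁻¹ * |ℓ θ (S i₀) - ℓ θ (S' i₀)| ≤ (m:ℝ)⁻¹ * 1 :=
          mul_le_mul_of_nonneg_left this (by positivity)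
      _ = (m:ℝ)⁻¹ := mul_one _
  have hintf : Integrable f (A S') := by
    exact ⟨hfmeas.aestronglyMeasurable, HasFiniteIntegral.of_bounded
      (C := 1) (Filter.Eventually.of_forall fun θ => by
        rw [norm_eq_abs, abs_of_nonneg (hf0 θ)]; exact hf1 θ)⟩
  have hintg : Integrable g (A S') := by
    exact ⟨hgmeas.aestronglyMeasurable, HasFiniteIntegral.of_bounded
      (C := 1) (Filter.Eventually.of_forall fun θ => by
        rw [norm_eq_abs, abs_of_nonneg (hg0 θ)]; exact hg1 θ)⟩
  have hb2 : |(∫ θ, f θ ∂(A S')) - ∫ θ, g θ ∂(A S')| ≤ (m:ℝ)⁻¹ := by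
    rw [← integral_sub hintf hintg]
    calc |∫ θ, (f θ - g θ) ∂(A S')| ≤ ∫ θ, |f θ - g θ| ∂(A S') := by
          simpa [Real.norm_eq_abs] using norm_integral_le_integral_norm (fun θ => f θ - g θ) (μ := A S')
      _ ≤ ∫ _θ, (m:ℝ)⁻¹ ∂(A S') := by
          apply integral_mono_of_nonneg (Filter.Eventually.of_forall fun θ => abs_nonneg _)
            (integrable_const _) (Filter.Eventually.of_forall hfg)
      _ = (m:ℝ)⁻¹ := by simp
  calc |(∫ θ, f θ ∂(A S)) - ∫ θ, g θ ∂(A S')|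
      ≤ |(∫ θ, f θ ∂(A S)) - ∫ θ, f θ ∂(A S')| + |(∫ θ, f θ ∂(A S')) - ∫ θ, g θ ∂(A S')| :=
        abs_sub_le _ _ _
    _ ≤ (exp ε - 1) + (m:ℝ)⁻¹ := add_le_add hb1 hb2
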